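/- Let m(t,x,v) = ρ(t,x) exp(−a(t,x)|v − u(t,x)|²) with ρ, a, u differentiable and ρ > 0, a > 0 almost everywhere on (0,T)×Ω, Ω ⊂ ℝ^d open. If m satisfies ∂ₜm + v·∇ₓm = 0 for all (t,x,v) ∈ (0,T)×Ω×ℝ^d, then a does not depend on x: ∇ₓa = 0 on (0,T)×Ω. -/

import Mathlib

open Set Matrix MeasureTheory

private lemma cubic_coeff_zero {c3 c2 c1 c0 : ℝ}
    (h : ∀ r : ℝ, c3*r^3 + c2*r^2 + c1*r + c0 = 0) : c3 = 0 := by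
  have h0 := h 0; have h1 := h 1; have h2 := h (-1); have h3 := h 2
  nlinarith [h0, h1, h2, h3]

private lemma step1 {d : ℕ} (ρ' a' : ℝ × (Fin d → ℝ) → ℝ)
    (u' : ℝ × (Fin d → ℝ) → (Fin d → ℝ)) (t : ℝ) (x : Fin d → ℝ)
    (hρ : DifferentiableAt ℝ ρ' (t, x)) (ha : DifferentiableAt ℝ a' (t, x))
    (hu : DifferentiableAt ℝ u' (t, x)) (hR : ρ' (t, x) ≠ 0)
    (htr : ∀ v : Fin d → ℝ,
      deriv (fun s => ρ' (s, x) * Real.exp (-(a' (s, x)) * ((v - u' (s, x)) ⬝ᵥ (v - u' (s, x))))) t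
      + fderiv ℝ (fun y => ρ' (t, y) * Real.exp (-(a' (t, y)) * ((v - u' (t, y)) ⬝ᵥ (v - u' (t, y))))) x v = 0)
    (w : Fin d → ℝ) : fderiv ℝ a' (t, x) (0, w) = 0 := by
  classical
  set p : ℝ × (Fin d → ℝ) := (t, x) with hp
  set Lρ := fderiv ℝ ρ' p with hLρ
  set La := fderiv ℝ a' p with hLa
  set Lu := fderiv ℝ u' p with hLu
  -- joint derivative of the Maxwellian for each fixed v
  have hM : ∀ v : Fin d → ℝ, HasFDerivAt
      (fun q => ρ' q * Real.exp (-(a' q) * ((v - u' q) ⬝ᵥ (v - u' q))))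
      (ρ' p • ((Real.exp (-(a' p) * ((v - u' p) ⬝ᵥ (v - u' p)))) •
          ((-(a' p)) • (∑ i : Fin d, ((v i - u' p i) • (-((ContinuousLinearMap.proj i).comp Lu))
              + (v i - u' p i) • (-((ContinuousLinearMap.proj i).comp Lu))))
            + ((v - u' p) ⬝ᵥ (v - u' p)) • (-La)))
        + (Real.exp (-(a' p) * ((v - u' p) ⬝ᵥ (v - u' p)))) • Lρ) p := by
    intro v
    have hui : ∀ i : Fin d, HasFDerivAt (fun q => u' q i)
        ((ContinuousLinearMap.proj i).comp Lu) p :=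
      fun i => (ContinuousLinearMap.proj (R := ℝ) (φ := fun _ : Fin d => ℝ) i).hasFDerivAt.comp p hu.hasFDerivAt
    have hterm : ∀ i : Fin d, HasFDerivAt (fun q => (v i - u' q i) * (v i - u' q i))
        ((v i - u' p i) • (-((ContinuousLinearMap.proj i).comp Lu))
          + (v i - u' p i) • (-((ContinuousLinearMap.proj i).comp Lu))) p :=
      fun i => ((hui i).const_sub (v i)).mul ((hui i).const_sub (v i))
    have hQ : HasFDerivAt (fun q => (v - u' q) ⬝ᵥ (v - u' q))
        (∑ i : Fin d, ((v i - u' p i) • (-((ContinuousLinearMap.proj i).comp Lu))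
          + (v i - u' p i) • (-((ContinuousLinearMap.proj i).comp Lu)))) p := by
      have := HasFDerivAt.fun_sum (fun i (_ : i ∈ Finset.univ) => hterm i)
      exact this
    exact (hρ.hasFDerivAt).mul ((ha.hasFDerivAt.neg.mul hQ).exp)
  have hpath : HasDerivAt (fun s : ℝ => ((s, x) : ℝ × (Fin d → ℝ))) (1, 0) t :=
    (hasDerivAt_id t).prodMk (hasDerivAt_const t x)
  have hpathx : HasFDerivAt (fun y : Fin d → ℝ => ((t, y) : ℝ × (Fin d → ℝ)))
      ((0 : (Fin d → ℝ) →L[ℝ] ℝ).prod (ContinuousLinearMap.id ℝ (Fin d → ℝ))) x :=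
    (hasFDerivAt_const t x).prodMk (hasFDerivAt_id x)
  by_cases hw : w = 0
  · subst hw
    have : ((0 : ℝ), (0 : Fin d → ℝ)) = (0 : ℝ × (Fin d → ℝ)) := rfl
    rw [this, map_zero]
  -- scalar abbreviations
  have key : ∀ r : ℝ,
      (-(ρ' p) * (La (0, w)) * (∑ x : Fin d, w x * w x)) * r^3
      + (2 * a' p * ρ' p * (∑ x : Fin d, w x * Lu (0, w) x)
          - ρ' p * (La (1, 0)) * (∑ x : Fin d, w x * w x)
          + 2 * ρ' p * (La (0, w)) * (∑ x : Fin d, w x * u' p x)) * r^2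
      + (2 * a' p * ρ' p * (∑ x : Fin d, w x * Lu (1, 0) x)
          - 2 * a' p * ρ' p * (∑ x : Fin d, u' p x * Lu (0, w) x)
          + 2 * ρ' p * (La (1, 0)) * (∑ x : Fin d, w x * u' p x)
          - ρ' p * (La (0, w)) * (∑ x : Fin d, u' p x * u' p x)
          + Lρ (0, w)) * r
      + (-2 * a' p * ρ' p * (∑ x : Fin d, u' p x * Lu (1, 0) x)
          - ρ' p * (La (1, 0)) * (∑ x : Fin d, u' p x * u' p x)
          + Lρ (1, 0)) = 0 := by
    intro r
    have h0w : ((0 : ℝ), r • w) = r • (((0 : ℝ), w) : ℝ × (Fin d → ℝ)) := by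
      simp [Prod.smul_mk]
    have hMt : HasDerivAt (fun s => ρ' (s, x) * Real.exp (-(a' (s, x)) *
        ((r • w - u' (s, x)) ⬝ᵥ (r • w - u' (s, x))))) _ t :=
      (hM (r • w)).comp_hasDerivAt (l := fun q => ρ' q * Real.exp (-(a' q) * ((r • w - u' q) ⬝ᵥ (r • w - u' q)))) t hpath
    have hMx : HasFDerivAt (fun y => ρ' (t, y) * Real.exp (-(a' (t, y)) *
        ((r • w - u' (t, y)) ⬝ᵥ (r • w - u' (t, y))))) _ x :=
      (hM (r • w)).comp x hpathx
    have htrv := htr (r • w)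
    rw [hMt.deriv, hMx.fderiv] at htrv
    simp only [ContinuousLinearMap.add_apply, ContinuousLinearMap.coe_comp',
      Function.comp_apply, ContinuousLinearMap.smul_apply, ContinuousLinearMap.neg_apply,
      ContinuousLinearMap.coe_sum', Finset.sum_apply, ContinuousLinearMap.proj_apply,
      ContinuousLinearMap.prod_apply, ContinuousLinearMap.zero_apply,
      ContinuousLinearMap.id_apply, smul_eq_mul, h0w, _root_.map_smul,
      dotProduct, Pi.sub_apply, Pi.smul_apply] at htrv
    have hS1 : (∑ x : Fin d, (r * w x - u' p x) * (r * w x - u' p x))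
        = r^2 * (∑ x : Fin d, w x * w x) - 2*r*(∑ x : Fin d, w x * u' p x)
          + (∑ x : Fin d, u' p x * u' p x) := by
      rw [Finset.sum_congr rfl (fun x _ => show (r * w x - u' p x) * (r * w x - u' p x)
        = r^2*(w x*w x) - 2*r*(w x*u' p x) + u' p x*u' p x from by ring),
        Finset.sum_add_distrib, Finset.sum_sub_distrib, ← Finset.mul_sum, ← Finset.mul_sum]
    have hS2 : (∑ x : Fin d, ((r * w x - u' p x) * -Lu (1, 0) x
          + (r * w x - u' p x) * -Lu (1, 0) x))
        = -2*r*(∑ x : Fin d, w x * Lu (1, 0) x) + 2*(∑ x : Fin d, u' p x * Lu (1, 0) x) := by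
      rw [Finset.sum_congr rfl (fun x _ => show (r * w x - u' p x) * -Lu (1, 0) x
            + (r * w x - u' p x) * -Lu (1, 0) x
          = -2*r*(w x * Lu (1, 0) x) + 2*(u' p x * Lu (1, 0) x) from by ring),
        Finset.sum_add_distrib, ← Finset.mul_sum, ← Finset.mul_sum]
    have hS3 : (∑ x : Fin d, ((r * w x - u' p x) * -Lu (0, w) x
          + (r * w x - u' p x) * -Lu (0, w) x))
        = -2*r*(∑ x : Fin d, w x * Lu (0, w) x) + 2*(∑ x : Fin d, u' p x * Lu (0, w) x) := by
      rw [Finset.sum_congr rfl (fun x _ => show (r * w x - u' p x) * -Lu (0, w) x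
            + (r * w x - u' p x) * -Lu (0, w) x
          = -2*r*(w x * Lu (0, w) x) + 2*(u' p x * Lu (0, w) x) from by ring),
        Finset.sum_add_distrib, ← Finset.mul_sum, ← Finset.mul_sum]
    rw [hS2, hS3, hS1] at htrv
    have hEB : Real.exp (-a' p * (r^2 * (∑ x : Fin d, w x * w x)
          - 2*r*(∑ x : Fin d, w x * u' p x) + (∑ x : Fin d, u' p x * u' p x)))
        * ((-(ρ' p) * (La (0, w)) * (∑ x : Fin d, w x * w x)) * r^3
          + (2 * a' p * ρ' p * (∑ x : Fin d, w x * Lu (0, w) x)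
              - ρ' p * (La (1, 0)) * (∑ x : Fin d, w x * w x)
              + 2 * ρ' p * (La (0, w)) * (∑ x : Fin d, w x * u' p x)) * r^2
          + (2 * a' p * ρ' p * (∑ x : Fin d, w x * Lu (1, 0) x)
              - 2 * a' p * ρ' p * (∑ x : Fin d, u' p x * Lu (0, w) x)
              + 2 * ρ' p * (La (1, 0)) * (∑ x : Fin d, w x * u' p x)
              - ρ' p * (La (0, w)) * (∑ x : Fin d, u' p x * u' p x)
              + Lρ (0, w)) * r
          + (-2 * a' p * ρ' p * (∑ x : Fin d, u' p x * Lu (1, 0) x)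
              - ρ' p * (La (1, 0)) * (∑ x : Fin d, u' p x * u' p x)
              + Lρ (1, 0))) = 0 := by
      linear_combination htrv
    exact (mul_eq_zero.mp hEB).resolve_left (Real.exp_ne_zero _)
  have c3 := cubic_coeff_zero key
  have hex : ∃ i, w i ≠ 0 := by
    by_contra h; push_neg at h; exact hw (funext h)
  obtain ⟨i0, hi0⟩ := hex
  have hK1 : 0 < ∑ x : Fin d, w x * w x :=
    Finset.sum_pos' (fun i _ => mul_self_nonneg _) ⟨i0, Finset.mem_univ _, mul_self_pos.mpr hi0⟩
  have h1 : ρ' p * (La (0, w) * (∑ x : Fin d, w x * w x)) = 0 := by linarith [c3]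
  rcases mul_eq_zero.mp h1 with h | h
  · exact absurd h hR
  rcases mul_eq_zero.mp h with h' | h'
  · exact h'
  · exact absurd h' (ne_of_gt hK1)


theorem maxwellian_transport_implies_a_independent_of_x
    (d : ℕ) (T : ℝ) (hT : 0 < T)
    (Ω : Set (Fin d → ℝ)) (hΩ : IsOpen Ω) (hconn : IsConnected Ω)
    (ρ a : ℝ → (Fin d → ℝ) → ℝ) (u : ℝ → (Fin d → ℝ) → (Fin d → ℝ))
    (hρ : ∀ t ∈ Ioo 0 T, ∀ x ∈ Ω,
      DifferentiableAt ℝ (fun p : ℝ × (Fin d → ℝ) => ρ p.1 p.2) (t, x))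
    (ha : ∀ t ∈ Ioo 0 T, ∀ x ∈ Ω,
      DifferentiableAt ℝ (fun p : ℝ × (Fin d → ℝ) => a p.1 p.2) (t, x))
    (hu : ∀ t ∈ Ioo 0 T, ∀ x ∈ Ω,
      DifferentiableAt ℝ (fun p : ℝ × (Fin d → ℝ) => u p.1 p.2) (t, x))
    (hpos : ∀ᵐ p ∂(volume.restrict ((Ioo (0:ℝ) T) ×ˢ Ω) :
        Measure (ℝ × (Fin d → ℝ))), 0 < ρ p.1 p.2 ∧ 0 < a p.1 p.2)
    (m : ℝ → (Fin d → ℝ) → (Fin d → ℝ) → ℝ)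
    (hm : ∀ t x v, m t x v
      = ρ t x * Real.exp (-(a t x) * ((v - u t x) ⬝ᵥ (v - u t x))))
    (htransport : ∀ t ∈ Ioo 0 T, ∀ x ∈ Ω, ∀ v : Fin d → ℝ,
      deriv (fun s => m s x v) t + fderiv ℝ (fun y => m t y v) x v = 0) :
    ∀ t ∈ Ioo 0 T, ∀ x ∈ Ω, fderiv ℝ (fun y => a t y) x = 0 := by
  classical
  intro t ht x hx
  set D : Set (ℝ × (Fin d → ℝ)) := (Ioo (0:ℝ) T) ×ˢ Ω with hDdef
  have hDopen : IsOpen D := isOpen_Ioo.prod hΩ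
  set ρ' : ℝ × (Fin d → ℝ) → ℝ := fun p => ρ p.1 p.2 with hρ'def
  set a' : ℝ × (Fin d → ℝ) → ℝ := fun p => a p.1 p.2 with ha'def
  set u' : ℝ × (Fin d → ℝ) → (Fin d → ℝ) := fun p => u p.1 p.2 with hu'def
  have hρD : ∀ p ∈ D, DifferentiableAt ℝ ρ' p := fun p hp => hρ p.1 hp.1 p.2 hp.2
  have haD : ∀ p ∈ D, DifferentiableAt ℝ a' p := fun p hp => ha p.1 hp.1 p.2 hp.2
  have huD : ∀ p ∈ D, DifferentiableAt ℝ u' p := fun p hp => hu p.1 hp.1 p.2 hp.2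
  have hbad : (volume.restrict D) {p : ℝ × (Fin d → ℝ) | ¬ (0 < ρ' p ∧ 0 < a' p)} = 0 :=
    ae_iff.mp hpos
  set N : Set (ℝ × (Fin d → ℝ)) :=
    toMeasurable (volume.restrict D) {p : ℝ × (Fin d → ℝ) | ¬ (0 < ρ' p ∧ 0 < a' p)} ∩ D
    with hNdef
  have hNmeas : MeasurableSet N :=
    (measurableSet_toMeasurable _ _).inter hDopen.measurableSet
  have hNnull : volume N = 0 := by
    have h1 : (volume.restrict D)
        (toMeasurable (volume.restrict D) {p : ℝ × (Fin d → ℝ) | ¬ (0 < ρ' p ∧ 0 < a' p)}) = 0 := by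
      rw [measure_toMeasurable]; exact hbad
    rwa [Measure.restrict_apply (measurableSet_toMeasurable _ _)] at h1
  have hgood : ∀ p ∈ D, p ∉ N → 0 < ρ' p := by
    intro p hp hpN
    by_contra h
    exact hpN ⟨subset_toMeasurable _ _ (fun hc => h hc.1), hp⟩
  have key : ∀ p ∈ D, p ∉ N → ∀ w : Fin d → ℝ, fderiv ℝ a' p ((0:ℝ), w) = 0 := by
    intro p hp hpN w
    have h1 : DifferentiableAt ℝ ρ' (p.1, p.2) := hρD p hp
    have h2 : DifferentiableAt ℝ a' (p.1, p.2) := haD p hp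
    have h3 : DifferentiableAt ℝ u' (p.1, p.2) := huD p hp
    refine step1 ρ' a' u' p.1 p.2 h1 h2 h3 (ne_of_gt (hgood p hp hpN)) ?_ w
    intro v
    have hm1 : (fun s => ρ' (s, p.2) * Real.exp (-(a' (s, p.2)) *
        ((v - u' (s, p.2)) ⬝ᵥ (v - u' (s, p.2))))) = fun s => m s p.2 v :=
      funext fun s => (hm s p.2 v).symm
    have hm2 : (fun y => ρ' (p.1, y) * Real.exp (-(a' (p.1, y)) *
        ((v - u' (p.1, y)) ⬝ᵥ (v - u' (p.1, y))))) = fun y => m p.1 y v :=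
      funext fun y => (hm p.1 y v).symm
    rw [hm1, hm2]
    exact htransport p.1 hp.1 p.2 hp.2 v
  have hmemD : ((t, x) : ℝ × (Fin d → ℝ)) ∈ D := ⟨ht, hx⟩
  obtain ⟨r, hrpos, hrball⟩ := Metric.isOpen_iff.mp hDopen (t, x) hmemD
  have hconst : ∀ y : Fin d → ℝ, dist y x < r/2 → a t y = a t x := by
    intro y hy
    haveI : (volume : Measure (ℝ × (Fin d → ℝ))).IsAddRightInvariant := by
      rw [Measure.volume_eq_prod]; infer_instance
    set w : Fin d → ℝ := y - x with hwdef
    have hwn : ‖w‖ < r/2 := by rw [hwdef, ← dist_eq_norm]; exact hy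
    have hnorm0w : ‖(((0:ℝ), w) : ℝ × (Fin d → ℝ))‖ = ‖w‖ := by
      rw [Prod.norm_def]; simp
    -- a.e. line through p in direction (0,w) meets N in a null set
    have hswapnull : (volume : Measure ((ℝ × (Fin d → ℝ)) × ℝ))
        {q : (ℝ × (Fin d → ℝ)) × ℝ | q.1 + q.2 • ((0:ℝ), w) ∈ N} = 0 := by
      have hmeas1 : MeasurableSet {q : ℝ × ((ℝ × (Fin d → ℝ))) | q.2 + q.1 • ((0:ℝ), w) ∈ N} := by
        have hc : Continuous fun q : ℝ × (ℝ × (Fin d → ℝ)) => q.2 + q.1 • ((0:ℝ), w) := by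
          fun_prop
        exact hNmeas.preimage hc.measurable
      have h1 : (volume : Measure (ℝ × ((ℝ × (Fin d → ℝ)))))
          {q : ℝ × ((ℝ × (Fin d → ℝ))) | q.2 + q.1 • ((0:ℝ), w) ∈ N} = 0 := by
        rw [Measure.volume_eq_prod, Measure.measure_prod_null hmeas1]
        refine Filter.Eventually.of_forall (fun σ => ?_)
        have hset : (Prod.mk σ ⁻¹' {q : ℝ × ((ℝ × (Fin d → ℝ))) | q.2 + q.1 • ((0:ℝ), w) ∈ N})
            = (fun p : ℝ × (Fin d → ℝ) => p + σ • ((0:ℝ), w)) ⁻¹' N := rfl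
        show volume (Prod.mk σ ⁻¹' _) = 0
        rw [hset]
        have := measure_preimage_add_right (volume : Measure (ℝ × (Fin d → ℝ)))
          (σ • (((0:ℝ), w) : ℝ × (Fin d → ℝ))) N
        rw [this]
        exact hNnull
      have hset2 : {q : (ℝ × (Fin d → ℝ)) × ℝ | q.1 + q.2 • ((0:ℝ), w) ∈ N}
          = Prod.swap ⁻¹' {q : ℝ × ((ℝ × (Fin d → ℝ))) | q.2 + q.1 • ((0:ℝ), w) ∈ N} := rfl
      rw [hset2, Measure.volume_eq_prod]
      rw [Measure.measurePreserving_swap.measure_preimage hmeas1.nullMeasurableSet]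
      rw [← Measure.volume_eq_prod]
      exact h1
    have hae : ∀ᵐ p : ℝ × (Fin d → ℝ),
        (volume : Measure ℝ) {σ : ℝ | p + σ • ((0:ℝ), w) ∈ N} = 0 := by
      have h2 : ((volume : Measure (ℝ × (Fin d → ℝ))).prod (volume : Measure ℝ))
          {q : (ℝ × (Fin d → ℝ)) × ℝ | q.1 + q.2 • ((0:ℝ), w) ∈ N} = 0 := by
        rw [← Measure.volume_eq_prod]; exact hswapnull
      have h3 := Measure.measure_ae_null_of_prod_null h2
      filter_upwards [h3] with p hp
      exact hp
    set S : Set (ℝ × (Fin d → ℝ)) :=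
      {p : ℝ × (Fin d → ℝ) | (volume : Measure ℝ) {σ : ℝ | p + σ • ((0:ℝ), w) ∈ N} = 0}
        ∩ Metric.ball ((t, x) : ℝ × (Fin d → ℝ)) (r/2) with hSdef
    have hclos : ((t, x) : ℝ × (Fin d → ℝ)) ∈ closure S := by
      rw [mem_closure_iff]
      intro o ho hmem
      by_contra hcon
      rw [not_nonempty_iff_eq_empty] at hcon
      have hsub : o ∩ Metric.ball ((t, x) : ℝ × (Fin d → ℝ)) (r/2) ⊆
          {p : ℝ × (Fin d → ℝ) | ¬ (volume : Measure ℝ) {σ : ℝ | p + σ • ((0:ℝ), w) ∈ N} = 0} := by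
        intro p hp hfalse
        have : p ∈ o ∩ S := ⟨hp.1, hfalse, hp.2⟩
        rw [hcon] at this
        exact this
      have hnull : volume {p : ℝ × (Fin d → ℝ) |
          ¬ (volume : Measure ℝ) {σ : ℝ | p + σ • ((0:ℝ), w) ∈ N} = 0} = 0 := ae_iff.mp hae
      have hopen2 : IsOpen (o ∩ Metric.ball ((t, x) : ℝ × (Fin d → ℝ)) (r/2)) :=
        ho.inter Metric.isOpen_ball
      have hne2 : (o ∩ Metric.ball ((t, x) : ℝ × (Fin d → ℝ)) (r/2)).Nonempty :=
        ⟨(t, x), hmem, Metric.mem_ball_self (by positivity)⟩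
      exact absurd (measure_mono_null hsub hnull) (ne_of_gt (hopen2.measure_pos volume hne2))
    have hkey2 : ∀ p₀ ∈ S, a' (p₀ + ((0:ℝ), w)) = a' p₀ := by
      intro p₀ hp₀
      obtain ⟨hline, hp₀ball⟩ := hp₀
      have hseg : ∀ σ : ℝ, σ ∈ Icc (0:ℝ) 1 →
          p₀ + σ • ((0:ℝ), w) ∈ Metric.ball ((t, x) : ℝ × (Fin d → ℝ)) r := by
        intro σ hσ
        have h1 : dist (p₀ + σ • (((0:ℝ), w) : ℝ × (Fin d → ℝ))) ((t, x) : ℝ × (Fin d → ℝ))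
            ≤ dist (p₀ + σ • (((0:ℝ), w) : ℝ × (Fin d → ℝ))) p₀ + dist p₀ ((t, x) : ℝ × (Fin d → ℝ)) :=
          dist_triangle _ _ _
        have h2 : dist (p₀ + σ • (((0:ℝ), w) : ℝ × (Fin d → ℝ))) p₀
            = ‖σ • (((0:ℝ), w) : ℝ × (Fin d → ℝ))‖ := dist_self_add_left _ _
        have h3 : ‖σ • (((0:ℝ), w) : ℝ × (Fin d → ℝ))‖ ≤ ‖w‖ := by
          rw [norm_smul, hnorm0w, Real.norm_eq_abs]
          calc |σ| * ‖w‖ ≤ 1 * ‖w‖ := by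
                apply mul_le_mul_of_nonneg_right _ (norm_nonneg w)
                rw [abs_le]; constructor <;> [linarith [hσ.1]; linarith [hσ.2]]
            _ = ‖w‖ := one_mul _
        have h4 : dist p₀ ((t, x) : ℝ × (Fin d → ℝ)) < r/2 := hp₀ball
        rw [Metric.mem_ball]
        calc dist (p₀ + σ • (((0:ℝ), w) : ℝ × (Fin d → ℝ))) ((t, x) : ℝ × (Fin d → ℝ))
            ≤ ‖σ • (((0:ℝ), w) : ℝ × (Fin d → ℝ))‖ + dist p₀ ((t, x) : ℝ × (Fin d → ℝ)) := by
              rw [← h2]; exact h1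
          _ ≤ ‖w‖ + dist p₀ ((t, x) : ℝ × (Fin d → ℝ)) := by linarith
          _ < r/2 + r/2 := by linarith
          _ = r := by ring
      set F : ℝ → ℝ := fun σ => fderiv ℝ a' (p₀ + σ • (((0:ℝ), w) : ℝ × (Fin d → ℝ))) ((0:ℝ), w)
        with hFdef
      have hder : ∀ σ ∈ uIcc (0:ℝ) 1,
          HasDerivAt (fun τ : ℝ => a' (p₀ + τ • (((0:ℝ), w) : ℝ × (Fin d → ℝ)))) (F σ) σ := by
        intro σ hσ
        rw [uIcc_of_le zero_le_one] at hσ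
        have hmem : p₀ + σ • (((0:ℝ), w) : ℝ × (Fin d → ℝ)) ∈ D := hrball (hseg σ hσ)
        have hpath : HasDerivAt (fun τ : ℝ => p₀ + τ • (((0:ℝ), w) : ℝ × (Fin d → ℝ)))
            (((0:ℝ), w) : ℝ × (Fin d → ℝ)) σ := by
          simpa using ((hasDerivAt_id σ).smul_const (((0:ℝ), w) : ℝ × (Fin d → ℝ))).const_add p₀
        exact ((haD _ hmem).hasFDerivAt).comp_hasDerivAt σ hpath
      have hae2 : ∀ᵐ σ : ℝ, p₀ + σ • (((0:ℝ), w) : ℝ × (Fin d → ℝ)) ∉ N := by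
        rw [ae_iff]
        simpa using hline
      have hmain : ∀ᵐ σ : ℝ, σ ∈ Set.uIoc (0:ℝ) 1 → F σ = 0 := by
        filter_upwards [hae2] with σ h1 h2
        have hσIcc : σ ∈ Icc (0:ℝ) 1 := by
          rw [Set.uIoc_of_le zero_le_one] at h2
          exact ⟨le_of_lt h2.1, h2.2⟩
        have hmem : p₀ + σ • (((0:ℝ), w) : ℝ × (Fin d → ℝ)) ∈ D := hrball (hseg σ hσIcc)
        exact key _ hmem h1 w
      have hFae : F =ᵐ[volume.restrict (Set.uIoc (0:ℝ) 1)] 0 := by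
        have h6 := (ae_restrict_iff' measurableSet_uIoc).mpr hmain
        filter_upwards [h6] with σ h7
        exact h7
      have hInt : IntervalIntegrable F volume 0 1 := by
        rw [intervalIntegrable_iff]
        exact (integrable_zero _ _ _).congr hFae.symm
      have hFTC := intervalIntegral.integral_eq_sub_of_hasDerivAt hder hInt
      have hzero : ∫ σ in (0:ℝ)..1, F σ = 0 := by
        rw [intervalIntegral.integral_congr_ae (g := fun _ => (0:ℝ)) hmain]
        simp
      rw [hzero] at hFTC
      have h8 := hFTC.symm
      rw [sub_eq_zero] at h8
      simpa using h8
    have hty : ((t, x) : ℝ × (Fin d → ℝ)) + ((0:ℝ), w) ∈ D := by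
      apply hrball
      rw [Metric.mem_ball]
      have h9 : dist (((t, x) : ℝ × (Fin d → ℝ)) + ((0:ℝ), w)) ((t, x) : ℝ × (Fin d → ℝ))
          = ‖(((0:ℝ), w) : ℝ × (Fin d → ℝ))‖ := dist_self_add_left _ _
      rw [h9, hnorm0w]
      linarith
    have hcont : ContinuousWithinAt
        (fun p : ℝ × (Fin d → ℝ) => a' (p + ((0:ℝ), w)) - a' p) S ((t, x) : ℝ × (Fin d → ℝ)) := by
      apply ContinuousAt.continuousWithinAt
      apply ContinuousAt.sub
      · have hg : ContinuousAt (fun p : ℝ × (Fin d → ℝ) => p + ((0:ℝ), w)) (t, x) := by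
          fun_prop
        exact (ContinuousAt.comp (haD _ hty).continuousAt hg :
          ContinuousAt (a' ∘ fun p : ℝ × (Fin d → ℝ) => p + ((0:ℝ), w)) (t, x))
      · exact (haD _ hmemD).continuousAt
    have hmemcl := hcont.mem_closure_image hclos
    have himg : (fun p : ℝ × (Fin d → ℝ) => a' (p + ((0:ℝ), w)) - a' p) '' S ⊆ {(0:ℝ)} := by
      rintro _ ⟨p₀, hp₀, rfl⟩
      simp [hkey2 p₀ hp₀]
    have hcl0 : (fun p : ℝ × (Fin d → ℝ) => a' (p + ((0:ℝ), w)) - a' p) ((t, x)) ∈ ({(0:ℝ)} : Set ℝ) := by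
      have := closure_mono himg hmemcl
      rwa [closure_singleton] at this
    have heq0 : a' (((t, x) : ℝ × (Fin d → ℝ)) + ((0:ℝ), w)) = a' ((t, x)) := by
      have h10 : a' (((t, x) : ℝ × (Fin d → ℝ)) + ((0:ℝ), w)) - a' ((t, x)) = 0 :=
        mem_singleton_iff.mp hcl0
      linarith
    have hptsum : (((t, x) : ℝ × (Fin d → ℝ)) + ((0:ℝ), w)) = ((t + 0, x + w) : ℝ × (Fin d → ℝ)) := rfl
    rw [hptsum] at heq0
    have hxw : x + w = y := by rw [hwdef]; abel
    rw [add_zero, hxw] at heq0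
    exact heq0
  have hev : (fun y => a t y) =ᶠ[nhds x] (fun _ => a t x) := by
    filter_upwards [Metric.ball_mem_nhds x (half_pos hrpos)] with y hy
    exact hconst y (Metric.mem_ball.mp hy)
  rw [hev.fderiv_eq, fderiv_fun_const]
  rfl
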